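/- arXiv:1509.00719 — 2 statements merged into one kernel-verified Lean document; each statement's English description precedes it below -/
import Mathlib

section
/- Let G and H be Polish groups, let ψ : G → H be a normal compression, and let K be a closed normal subgroup of G such that ψ(K) is dense in H. Then the topological closure of the commutator subgroup [G,G] is contained in K, and every closed subgroup of K that is normal in K is normal in G. -/
open Filter Topology Set Pointwise

set_option maxHeartbeats 1000000

section AuxBaire

variable {X : Type*} [TopologicalSpace X]

private lemma aux_open_not_meagre [BaireSpace X] {U : Set X} (ho : IsOpen U)
    (hne : U.Nonempty) : ¬ IsMeagre U := by
  intro h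
  obtain ⟨x, hx1, hx2⟩ := (dense_of_mem_residual h).inter_open_nonempty U ho hne
  exact hx2 hx1

/-- Pettis' lemma: for a nonmeager Baire-measurable set `A` in a topological group,
`A * A⁻¹` is a neighborhood of `1`. -/
private lemma aux_diff_mem_nhds {X : Type*} [TopologicalSpace X] [Group X]
    [IsTopologicalGroup X] [BaireSpace X] {A : Set X} (hA : BaireMeasurableSet A)
    (hnm : ¬ IsMeagre A) : A * A⁻¹ ∈ 𝓝 (1 : X) := by
  obtain ⟨U, Uo, hAU⟩ := hA.residualEq_isOpen
  set M : Set X := {x | (x ∈ A) = (x ∈ U)}ᶜ with hMdef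
  have hMmeag : IsMeagre M := by
    rw [IsMeagre, compl_compl]; exact hAU
  have hAM : ∀ x, x ∉ M → ((x ∈ A) ↔ (x ∈ U)) := by
    intro x hx
    have : (x ∈ A) = (x ∈ U) := not_not.mp hx
    exact this ▸ Iff.rfl
  have hUne : U.Nonempty := by
    rcases eq_empty_or_nonempty U with h | h
    · exfalso
      apply hnm
      apply hMmeag.mono
      intro x hx
      by_contra hxM
      exact absurd ((hAM x hxM).mp hx) (by simp [h])
    · exact h
  obtain ⟨x₀, hx₀⟩ := hUne
  have hNopen : IsOpen ((fun g => g * x₀) ⁻¹' U) := Uo.preimage (continuous_mul_right x₀)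
  have h1N : (1 : X) ∈ (fun g => g * x₀) ⁻¹' U := by simpa using hx₀
  refine mem_of_superset (hNopen.mem_nhds h1N) ?_
  intro g hg
  set P := U ∩ (fun y => g⁻¹ * y) ⁻¹' U with hPdef
  have hPo : IsOpen P := Uo.inter (Uo.preimage (continuous_mul_left g⁻¹))
  have hPne : P.Nonempty := ⟨g * x₀, hg, by simpa [inv_mul_cancel_left] using hx₀⟩
  set M' := M ∪ (fun y => g⁻¹ * y) ⁻¹' M with hM'def
  have hM'meag : IsMeagre M' := by
    have h2 : IsMeagre ((fun y => g⁻¹ * y) ⁻¹' M) :=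
      hMmeag.preimage_of_isOpenMap (continuous_mul_left g⁻¹)
        (Homeomorph.mulLeft g⁻¹).isOpenMap
    rw [IsMeagre, hM'def, compl_union]
    exact inter_mem hMmeag h2
  have hPM : ¬ (P ⊆ M') := by
    intro hsub
    exact aux_open_not_meagre hPo hPne (hM'meag.mono hsub)
  obtain ⟨y, hyP, hyM'⟩ := not_subset.mp hPM
  have hyA : y ∈ A := (hAM y (fun h => hyM' (Or.inl h))).mpr hyP.1
  have hy'A : g⁻¹ * y ∈ A := (hAM _ (fun h => hyM' (Or.inr h))).mpr hyP.2
  have : y * (g⁻¹ * y)⁻¹ ∈ A * A⁻¹ :=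
    Set.mul_mem_mul hyA (Set.inv_mem_inv.mpr hy'A)
  simpa [mul_inv_rev, mul_assoc] using this

/-- Pettis' theorem: a measurable homomorphism from a Polish group to itself is continuous. -/
private lemma aux_pettis {X : Type*} [TopologicalSpace X] [PolishSpace X] [Group X]
    [IsTopologicalGroup X] [MeasurableSpace X] [BorelSpace X]
    (f : X →* X) (hf : Measurable f) : Continuous f := by
  letI := TopologicalSpace.upgradeIsCompletelyMetrizable X
  apply continuous_of_continuousAt_one f
  rw [ContinuousAt, map_one]
  intro W hW
  rw [Filter.mem_map]
  obtain ⟨V₂, V₂o, hV₂1, hV₂⟩ := exists_open_nhds_one_mul_subset hW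
  obtain ⟨V, Vo, hV1, hV⟩ := exists_open_nhds_one_mul_subset (V₂o.mem_nhds hV₂1)
  set S := V ∩ V⁻¹ with hSdef
  have hSo : IsOpen S := Vo.inter Vo.inv
  have hS1 : (1 : X) ∈ S := ⟨hV1, by simpa using hV1⟩
  have hSV : S ⊆ V := inter_subset_left
  have hSsym : ∀ s, s ∈ S → s⁻¹ ∈ S := by
    rintro s ⟨h1, h2⟩
    exact ⟨h2, by simpa using h1⟩
  set A := f ⁻¹' (S * S) with hAdef
  have hSSo : IsOpen (S * S) := hSo.mul_left
  have hAmeas : MeasurableSet A := hf hSSo.measurableSet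
  -- covering argument: A is nonmeager
  have hAnm : ¬ IsMeagre A := by
    intro hAmeag
    obtain ⟨T, hTc, hTd⟩ := TopologicalSpace.exists_countable_dense X
    have hcover : (univ : Set X) ⊆ ⋃ d ∈ T, f ⁻¹' (d • S) := by
      intro x _
      have hopen : IsOpen ((f x) • S) := hSo.smul (f x)
      have hne : ((f x) • S).Nonempty := ⟨f x, ⟨1, hS1, by simp⟩⟩
      obtain ⟨d, hd1, hd2⟩ := hTd.inter_open_nonempty _ hopen hne
      obtain ⟨s, hs, hds⟩ := hd1
      refine mem_biUnion hd2 ?_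
      refine ⟨s⁻¹, hSsym s hs, ?_⟩
      simp only [smul_eq_mul] at hds ⊢
      rw [← hds]; group
    -- each piece is meager, so univ is meager: contradiction
    have hmeag : ∀ d : X, IsMeagre (f ⁻¹' (d • S)) := by
      intro d
      rcases eq_empty_or_nonempty (f ⁻¹' (d • S)) with h | ⟨z, hz⟩
      · rw [h, IsMeagre, compl_empty]; exact univ_mem
      · have hsub : f ⁻¹' (d • S) ⊆ z • A := by
          intro u hu
          obtain ⟨s₂, hs₂, hds₂⟩ := hu
          obtain ⟨s₁, hs₁, hds₁⟩ := hz
          simp only [smul_eq_mul] at hds₁ hds₂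
          have : f (z⁻¹ * u) ∈ S * S := by
            rw [map_mul, map_inv, ← hds₁, ← hds₂]
            have : (d * s₁)⁻¹ * (d * s₂) = s₁⁻¹ * s₂ := by group
            rw [this]
            exact Set.mul_mem_mul (hSsym s₁ hs₁) hs₂
          exact ⟨z⁻¹ * u, this, by simp⟩
        have hzA : IsMeagre (z • A) := by
          have : z • A = (fun y => z⁻¹ * y) ⁻¹' A := by
            ext y
            simp [mem_smul_set_iff_inv_smul_mem, smul_eq_mul]
          rw [this]
          exact hAmeag.preimage_of_isOpenMap (continuous_mul_left z⁻¹)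
            (Homeomorph.mulLeft z⁻¹).isOpenMap
        exact hzA.mono hsub
    have : IsMeagre (univ : Set X) := by
      apply IsMeagre.mono hcover
      rw [IsMeagre, compl_iUnion₂]
      exact (countable_bInter_mem hTc).mpr (fun d _ => hmeag d)
    exact aux_open_not_meagre isOpen_univ univ_nonempty this
  have hAA : A * A⁻¹ ∈ 𝓝 (1 : X) := aux_diff_mem_nhds hAmeas.baireMeasurableSet hAnm
  apply mem_of_superset hAA
  rintro w ⟨a, ha, b, hb, rfl⟩
  rw [Set.mem_inv] at hb
  obtain ⟨s₁, hs₁, s₂, hs₂, hab₁⟩ := ha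
  obtain ⟨s₃, hs₃, s₄, hs₄, hab₂⟩ := hb
  have : f (a * b) = (s₁ * s₂) * (s₄⁻¹ * s₃⁻¹) := by
    rw [map_mul]
    have hfb : f b = (s₃ * s₄)⁻¹ := by
      have h' : s₃ * s₄ = f b⁻¹ := hab₂
      rw [h']; simp
    rw [← hab₁, hfb, mul_inv_rev, mul_assoc]
  rw [Set.mem_preimage, this]
  exact hV₂ (Set.mul_mem_mul (hV (Set.mul_mem_mul (hSV hs₁) (hSV hs₂)))
    (hV (Set.mul_mem_mul (hSV (hSsym _ hs₄)) (hSV (hSsym _ hs₃)))))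

/-- A measurable function into a second-countable space is continuous on a comeager set. -/
private lemma aux_exists_residual_continuousOn {X Y : Type*} [TopologicalSpace X]
    [MeasurableSpace X] [BorelSpace X] [TopologicalSpace Y] [MeasurableSpace Y]
    [BorelSpace Y] [SecondCountableTopology Y]
    {f : X → Y} (hf : Measurable f) : ∃ C ∈ residual X, ContinuousOn f C := by
  haveI : Countable (TopologicalSpace.countableBasis Y) :=
    (TopologicalSpace.countable_countableBasis Y).to_subtype
  have key : ∀ U : TopologicalSpace.countableBasis Y, ∃ V : Set X, IsOpen V ∧
      {x | (x ∈ f ⁻¹' (U : Set Y)) = (x ∈ V)} ∈ residual X := by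
    intro U
    have hUo : IsOpen (U : Set Y) :=
      (TopologicalSpace.isBasis_countableBasis Y).isOpen U.2
    obtain ⟨V, hVo, hV⟩ := (hf hUo.measurableSet).residualEq_isOpen
    exact ⟨V, hVo, hV⟩
  choose V hVo hres using key
  refine ⟨⋂ U, {x | (x ∈ f ⁻¹' ((U : TopologicalSpace.countableBasis Y) : Set Y)) = (x ∈ V U)},
    countable_iInter_mem.mpr hres, ?_⟩
  intro x hx
  have : Tendsto f (𝓝[⋂ U, {x | (x ∈ f ⁻¹' ((U : TopologicalSpace.countableBasis Y) : Set Y)) = (x ∈ V U)}] x) (𝓝 (f x)) := by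
    rw [tendsto_def]
    intro W hW
    obtain ⟨U, hUB, hfxU, hUW⟩ :=
      (TopologicalSpace.isBasis_countableBasis Y).mem_nhds_iff.mp hW
    apply mem_nhdsWithin.mpr
    refine ⟨V ⟨U, hUB⟩, hVo _, ?_, ?_⟩
    · have hxU := mem_iInter.mp hx ⟨U, hUB⟩
      exact cast hxU hfxU
    · rintro y ⟨hyV, hyC⟩
      have hyU := mem_iInter.mp hyC ⟨U, hUB⟩
      exact hUW (cast hyU.symm hyV)
  exact this

end AuxBaire

section ConjAct

variable {G H : Type*} [Group G] [Group H]

/-- The conjugation action of `H` on `G` through a normal compression `ψ`. -/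
private noncomputable def cAct (ψ : G →* H) (hnorm : ψ.range.Normal) (h : H) (g : G) : G :=
  (MonoidHom.mem_range.mp (hnorm.conj_mem (ψ g) ⟨g, rfl⟩ h)).choose

private lemma cAct_spec (ψ : G →* H) (hnorm : ψ.range.Normal) (h : H) (g : G) :
    ψ (cAct ψ hnorm h g) = h * ψ g * h⁻¹ :=
  (MonoidHom.mem_range.mp (hnorm.conj_mem (ψ g) ⟨g, rfl⟩ h)).choose_spec

variable {ψ : G →* H} (hnorm : ψ.range.Normal)

private lemma cAct_psi (hψi : Function.Injective ψ) (x g : G) : cAct ψ hnorm (ψ x) g = x * g * x⁻¹ :=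
  hψi (by rw [cAct_spec]; simp [map_mul])

private lemma cAct_one (hψi : Function.Injective ψ) (h : H) : cAct ψ hnorm h 1 = 1 :=
  hψi (by rw [cAct_spec]; simp)

private lemma cAct_mul (hψi : Function.Injective ψ) (h : H) (g₁ g₂ : G) :
    cAct ψ hnorm h (g₁ * g₂) = cAct ψ hnorm h g₁ * cAct ψ hnorm h g₂ :=
  hψi (by rw [map_mul, cAct_spec, cAct_spec, cAct_spec, map_mul]; group)

private lemma cAct_comp (hψi : Function.Injective ψ) (h₁ h₂ : H) (g : G) :
    cAct ψ hnorm h₁ (cAct ψ hnorm h₂ g) = cAct ψ hnorm (h₁ * h₂) g :=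
  hψi (by rw [cAct_spec, cAct_spec, cAct_spec]; group)

private lemma cAct_id (hψi : Function.Injective ψ) (g : G) : cAct ψ hnorm 1 g = g :=
  hψi (by rw [cAct_spec]; simp)

end ConjAct

/-- Let `G` and `H` be Polish groups, let `ψ : G → H` be a normal compression,
and let `K` be a closed normal subgroup of `G` such that `ψ(K)` is dense in `H`. Then the
topological closure of the commutator subgroup `[G,G]` is contained in `K`, and every closed
subgroup of `K` that is normal in `K` is normal in `G`. -/
theorem stmt_4 {G H : Type*}
    [Group G] [TopologicalSpace G] [IsTopologicalGroup G] [PolishSpace G]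
    [Group H] [TopologicalSpace H] [IsTopologicalGroup H] [PolishSpace H]
    (ψ : G →* H) (hψc : Continuous ψ) (hψi : Function.Injective ψ)
    (hdense : DenseRange (⇑ψ)) (hnorm : ψ.range.Normal)
    (K : Subgroup G) (hKc : IsClosed (K : Set G)) (hKn : K.Normal)
    (hKd : Dense (ψ '' (K : Set G))) :
    (commutator G).topologicalClosure ≤ K ∧
      ∀ M : Subgroup G, M ≤ K → IsClosed (M : Set G) →
        (∀ k ∈ K, ∀ m ∈ M, k * m * k⁻¹ ∈ M) → M.Normal := by
  letI := TopologicalSpace.upgradeIsCompletelyMetrizable G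
  letI := TopologicalSpace.upgradeIsCompletelyMetrizable H
  borelize G H
  have e : MeasurableEmbedding ψ := hψc.measurableEmbedding hψi
  -- each conjugation map is continuous (Pettis)
  have hαcont : ∀ h : H, Continuous (cAct ψ hnorm h) := by
    intro h
    have hcomp : (ψ ∘ cAct ψ hnorm h) = fun g => h * ψ g * h⁻¹ :=
      funext fun g => cAct_spec ψ hnorm h g
    have hm : Measurable (cAct ψ hnorm h) := by
      apply e.measurable_comp_iff.mp
      rw [hcomp]
      exact ((continuous_const.mul hψc).mul continuous_const).measurable
    exact aux_pettis ⟨⟨cAct ψ hnorm h, cAct_one hnorm hψi h⟩, cAct_mul hnorm hψi h⟩ hm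
  -- orbit maps are measurable
  have hθmeas : ∀ a : G, Measurable (fun h => cAct ψ hnorm h a) := by
    intro a
    apply e.measurable_comp_iff.mp
    have : (ψ ∘ fun h => cAct ψ hnorm h a) = fun h => h * ψ a * h⁻¹ :=
      funext fun h => cAct_spec ψ hnorm h a
    rw [this]
    exact ((continuous_id.mul continuous_const).mul continuous_inv).measurable
  -- orbit maps are continuous at 1
  have hθ1 : ∀ a : G, ContinuousAt (fun h => cAct ψ hnorm h a) 1 := by
    intro a
    rw [ContinuousAt]
    have h1 : cAct ψ hnorm (1 : H) a = a := cAct_id hnorm hψi a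
    rw [h1]
    rw [tendsto_iff_seq_tendsto]
    intro u hu
    obtain ⟨C, hC, hCont⟩ := aux_exists_residual_continuousOn (hθmeas a)
    have hE : (C ∩ ⋂ n : ℕ, (fun x => x * u n) ⁻¹' C) ∈ residual H := by
      apply inter_mem hC
      apply countable_iInter_mem.mpr
      intro n
      exact tendsto_residual_of_isOpenMap (continuous_mul_right (u n))
        (Homeomorph.mulRight (u n)).isOpenMap hC
    obtain ⟨v, hvC, hv2⟩ := (dense_of_mem_residual hE).nonempty
    have hmem : ∀ n, v * u n ∈ C := fun n => mem_iInter.mp hv2 n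
    have ht1 : Tendsto (fun n => v * u n) atTop (𝓝[C] v) := by
      rw [tendsto_nhdsWithin_iff]
      constructor
      · have : Tendsto (fun n => v * u n) atTop (𝓝 (v * 1)) :=
          ((continuous_mul_left v).tendsto 1).comp hu
        simpa using this
      · exact Eventually.of_forall hmem
    have ht2 : Tendsto (fun n => cAct ψ hnorm (v * u n) a) atTop (𝓝 (cAct ψ hnorm v a)) :=
      (hCont v hvC).tendsto.comp ht1
    have ht3 : Tendsto (fun n => cAct ψ hnorm v⁻¹ (cAct ψ hnorm (v * u n) a)) atTop
        (𝓝 (cAct ψ hnorm v⁻¹ (cAct ψ hnorm v a))) :=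
      ((hαcont v⁻¹).tendsto _).comp ht2
    have heq : ∀ n, cAct ψ hnorm v⁻¹ (cAct ψ hnorm (v * u n) a) = cAct ψ hnorm (u n) a := by
      intro n
      rw [cAct_comp hnorm hψi, inv_mul_cancel_left]
    have heq2 : cAct ψ hnorm v⁻¹ (cAct ψ hnorm v a) = a := by
      rw [cAct_comp hnorm hψi, inv_mul_cancel, cAct_id hnorm hψi]
    rw [heq2] at ht3
    refine ht3.congr (fun n => ?_)
    exact heq n
  -- orbit maps are continuous everywhere
  have hθcont : ∀ a : G, Continuous (fun h => cAct ψ hnorm h a) := by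
    intro a
    rw [continuous_iff_continuousAt]
    intro h₀
    have hcomp : ContinuousAt ((cAct ψ hnorm h₀) ∘ ((fun v => cAct ψ hnorm v a) ∘
        (fun h : H => h₀⁻¹ * h))) h₀ := by
      apply ContinuousAt.comp
      · exact (hαcont h₀).continuousAt
      · apply ContinuousAt.comp
        · show ContinuousAt (fun v => cAct ψ hnorm v a) (h₀⁻¹ * h₀)
          rw [inv_mul_cancel]
          exact hθ1 a
        · exact (continuous_mul_left h₀⁻¹).continuousAt
    have hfun : (cAct ψ hnorm h₀ ∘ (fun v => cAct ψ hnorm v a) ∘ (fun h : H => h₀⁻¹ * h))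
        = fun h => cAct ψ hnorm h a := by
      funext h
      simp only [Function.comp_apply]
      rw [cAct_comp hnorm hψi, mul_inv_cancel_left]
    rwa [hfun] at hcomp
  -- main closing lemma
  have hmain : ∀ (a : G) (S : Set G), IsClosed S → (∀ k ∈ K, k * a * k⁻¹ ∈ S) →
      ∀ x : G, x * a * x⁻¹ ∈ S := by
    intro a S hScl hKS x
    have hsub : closure (ψ '' (K : Set G)) ⊆ {h | cAct ψ hnorm h a ∈ S} := by
      apply closure_minimal ?_ (hScl.preimage (hθcont a))
      rintro _ ⟨k, hk, rfl⟩
      show cAct ψ hnorm (ψ k) a ∈ S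
      rw [cAct_psi hnorm hψi]
      exact hKS k hk
    have hall : ∀ h : H, cAct ψ hnorm h a ∈ S := by
      intro h
      apply hsub
      rw [hKd.closure_eq]
      trivial
    have := hall (ψ x)
    rwa [cAct_psi hnorm hψi] at this
  constructor
  · -- commutator closure ≤ K
    apply Subgroup.topologicalClosure_minimal _ _ hKc
    rw [commutator, Subgroup.commutator_le]
    intro x _ a _
    have hScl : IsClosed {g : G | g * a⁻¹ ∈ (K : Set G)} :=
      hKc.preimage (continuous_mul_right a⁻¹)
    have hmem : x * a * x⁻¹ ∈ {g : G | g * a⁻¹ ∈ (K : Set G)} := by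
      apply hmain a _ hScl
      intro k hk
      simp only [mem_setOf_eq]
      have : k * a * k⁻¹ * a⁻¹ = k * (a * k⁻¹ * a⁻¹) := by group
      rw [this]
      exact K.mul_mem hk (hKn.conj_mem k⁻¹ (K.inv_mem hk) a)
    open scoped commutatorElement in
    have : ⁅x, a⁆ = x * a * x⁻¹ * a⁻¹ := commutatorElement_def x a
    rw [this]
    exact hmem
  · intro M _ hMcl hMinv
    refine ⟨fun m hm x => ?_⟩
    exact hmain m (M : Set G) hMcl (fun k hk => hMinv k hk m hm) x
end

section
/- Let G and H be Polish groups with trivial center that are topologically perfect, and let ψ : G → H be a normal compression. Then G is topologically simple if and only if H is topologically simple. -/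
open Topology Filter Set Pointwise
open scoped commutatorElement

section AuxiliaryLemmas

/-- Pettis: a non-meager Baire-measurable set `B` in a Baire topological group satisfies
`B⁻¹ * B ∈ 𝓝 1`. -/
theorem pettis_aux {X : Type*} [TopologicalSpace X] [Group X] [IsTopologicalGroup X]
    [BaireSpace X] {B : Set X} (hB : BaireMeasurableSet B) (hnm : ¬ IsMeagre B) :
    B⁻¹ * B ∈ 𝓝 (1 : X) := by
  obtain ⟨U, Uopen, hBU⟩ := hB.residualEq_isOpen
  -- R : residual agreement set
  have hR : {x | x ∈ B ↔ x ∈ U} ∈ residual X := by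
    have := hBU
    unfold Filter.EventuallyEq at this
    refine this.mono fun x hx => ?_
    simp only [eq_iff_iff] at hx
    exact hx
  have hUne : U.Nonempty := by
    rcases U.eq_empty_or_nonempty with h | h
    · exfalso
      apply hnm
      rw [IsMeagre]
      refine Filter.mem_of_superset hR fun x hx => ?_
      simp only [mem_compl_iff]
      intro hxB
      have := (hx.1 hxB)
      rw [h] at this
      exact this
    · exact h
  obtain ⟨u₀, hu₀⟩ := hUne
  have hW : {g : X | u₀ * g ∈ U} ∈ 𝓝 (1 : X) := by
    have : Continuous fun g : X => u₀ * g := continuous_const.mul continuous_id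
    have := this.continuousAt (x := (1 : X))
    rw [ContinuousAt] at this
    simp only [mul_one] at this
    exact this (Uopen.mem_nhds hu₀)
  refine Filter.mem_of_superset hW fun g hg => ?_
  -- g : u₀ * g ∈ U, u₀ ∈ U. Find x ∈ B with x * g ∈ B.
  have hRg : (fun x : X => x * g) ⁻¹' {x | x ∈ B ↔ x ∈ U} ∈ residual X := by
    have hmap := (Homeomorph.mulRight g).residual_map_eq
    rw [← hmap, Filter.mem_map] at hR
    exact hR
  have hres : {x | x ∈ B ↔ x ∈ U} ∩ ((fun x : X => x * g) ⁻¹' {x | x ∈ B ↔ x ∈ U})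
      ∈ residual X := Filter.inter_mem hR hRg
  have hdense := dense_of_mem_residual hres
  have hopen : IsOpen (U ∩ (fun x : X => x * g) ⁻¹' U) :=
    Uopen.inter (Uopen.preimage (continuous_id.mul continuous_const))
  have hone : (U ∩ (fun x : X => x * g) ⁻¹' U).Nonempty := ⟨u₀, hu₀, hg⟩
  obtain ⟨x, hx1, hx2⟩ := hdense.inter_open_nonempty _ hopen hone
  rcases hx1 with ⟨hxU, hxgU⟩
  rcases hx2 with ⟨hxB, hxgB⟩
  have hxB' : x ∈ B := hxB.2 hxU
  have hxgB' : x * g ∈ B := hxgB.2 hxgU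
  exact ⟨x⁻¹, inv_mem_inv.mpr hxB', x * g, hxgB', by group⟩

/-- A measurable homomorphism between Polish groups is continuous. -/
theorem measurable_monoidHom_continuous {X Y : Type*}
    [Group X] [TopologicalSpace X] [IsTopologicalGroup X] [PolishSpace X]
    [MeasurableSpace X] [BorelSpace X]
    [Group Y] [TopologicalSpace Y] [IsTopologicalGroup Y] [PolishSpace Y]
    [MeasurableSpace Y] [BorelSpace Y]
    (θ : X →* Y) (hθ : Measurable θ) : Continuous θ := by
  haveI : BaireSpace X := by infer_instance
  -- continuity at 1 suffices
  have key : ∀ U ∈ 𝓝 (1 : Y), θ ⁻¹' U ∈ 𝓝 (1 : X) := by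
    intro U hU
    obtain ⟨V, Vopen, hV1, hVV⟩ := exists_open_nhds_one_mul_subset hU
    set W : Set Y := V ∩ V⁻¹ with hWdef
    have Wopen : IsOpen W := Vopen.inter (Vopen.preimage continuous_inv)
    have hW1 : (1 : Y) ∈ W := ⟨hV1, by simp [hV1]⟩
    have hWU : ∀ w₁ ∈ W, ∀ w₂ ∈ W, w₁⁻¹ * w₂ ∈ U := by
      intro w₁ hw₁ w₂ hw₂
      have h1 : w₁⁻¹ ∈ V := hw₁.2
      exact hVV ⟨w₁⁻¹, h1, w₂, hw₂.1, rfl⟩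
    obtain ⟨D, Dct, Ddense⟩ := TopologicalSpace.exists_countable_dense Y
    have hcover : (univ : Set X) ⊆ ⋃ d ∈ D, θ ⁻¹' {y : Y | d⁻¹ * y ∈ W} := by
      intro x _
      have hop : IsOpen {y : Y | y⁻¹ * θ x ∈ W} :=
        Wopen.preimage (continuous_inv.mul continuous_const)
      obtain ⟨d, hdD, hd⟩ := Ddense.exists_mem_open hop ⟨θ x, by simpa using hW1⟩
      simp only [mem_iUnion]
      exact ⟨d, hdD, hd⟩
    have hXnm : ¬ IsMeagre (univ : Set X) := by
      intro h
      rw [IsMeagre, compl_univ] at h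
      rcases (dense_of_mem_residual h).nonempty with ⟨x, hx⟩
      exact hx
    have hnm : ∃ d ∈ D, ¬ IsMeagre (θ ⁻¹' {y : Y | d⁻¹ * y ∈ W}) := by
      by_contra hall
      push_neg at hall
      apply hXnm
      refine IsMeagre.mono hcover ?_
      rw [IsMeagre, compl_iUnion₂]
      haveI : Countable D := Dct.to_subtype
      rw [biInter_eq_iInter]
      exact countable_iInter_mem.2 fun d => (hall d d.2)
    obtain ⟨d, hdD, hnmd⟩ := hnm
    set P : Set X := θ ⁻¹' {y : Y | d⁻¹ * y ∈ W} with hPdef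
    have hPmeas : MeasurableSet P := by
      apply hθ
      exact (Wopen.preimage (continuous_const.mul continuous_id)).measurableSet
    have hmem := pettis_aux hPmeas.baireMeasurableSet hnmd
    refine Filter.mem_of_superset hmem ?_
    rintro z ⟨a, ha, b, hb, rfl⟩
    rw [Set.mem_inv] at ha
    have hw₁ : d⁻¹ * θ a⁻¹ ∈ W := ha
    have hw₂ : d⁻¹ * θ b ∈ W := hb
    have hcalc : θ (a * b) = (d⁻¹ * θ a⁻¹)⁻¹ * (d⁻¹ * θ b) := by
      rw [map_mul, map_inv]
      group
    rw [mem_preimage, hcalc]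
    exact hWU _ hw₁ _ hw₂
  -- now conclude continuity
  rw [continuous_iff_continuousAt]
  intro x₀
  have heq : (θ : X → Y) = fun x => θ x₀ * θ (x₀⁻¹ * x) := by
    funext x; rw [← map_mul]; congr 1; group
  rw [heq]
  have h2 : Tendsto (θ : X → Y) (𝓝 (1 : X)) (𝓝 (1 : Y)) := by
    rw [Tendsto]
    intro U hU
    exact key U (by simpa using hU)
  have h1 : Tendsto (fun x : X => x₀⁻¹ * x) (𝓝 x₀) (𝓝 (1 : X)) := by
    have h1 : ContinuousAt (fun x : X => x₀⁻¹ * x) x₀ :=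
      (continuous_const.mul continuous_id).continuousAt
    rw [ContinuousAt] at h1
    simpa using h1
  have h3 : Tendsto (fun x => θ (x₀⁻¹ * x)) (𝓝 x₀) (𝓝 (1 : Y)) := h2.comp h1
  have h4 : Tendsto (fun x => θ x₀ * θ (x₀⁻¹ * x)) (𝓝 x₀) (𝓝 (θ x₀)) := by
    have := (tendsto_const_nhds (x := θ x₀) (f := 𝓝 x₀)).mul h3
    simpa using this
  rw [ContinuousAt]
  have : θ x₀ * θ (x₀⁻¹ * x₀) = θ x₀ := by simp
  rw [this]
  exact h4

/-- A measurable function into a second-countable space is continuous on a comeager set. -/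
theorem exists_residual_continuousWithinAt {X Y : Type*}
    [TopologicalSpace X] [MeasurableSpace X] [BorelSpace X]
    [TopologicalSpace Y] [SecondCountableTopology Y]
    [MeasurableSpace Y] [OpensMeasurableSpace Y]
    {f : X → Y} (hf : Measurable f) :
    ∃ C ∈ residual X, ∀ x ∈ C, ContinuousWithinAt f C x := by
  obtain ⟨b, bct, -, hbasis⟩ := TopologicalSpace.exists_countable_basis Y
  have key : ∀ V : b, ∃ U : Set X, IsOpen U ∧
      {x | x ∈ f ⁻¹' (V : Set Y) ↔ x ∈ U} ∈ residual X := by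
    rintro ⟨V, hV⟩
    have hmeas : MeasurableSet (f ⁻¹' V) := hf ((hbasis.isOpen hV).measurableSet)
    obtain ⟨U, Uopen, hU⟩ := hmeas.baireMeasurableSet.residualEq_isOpen
    refine ⟨U, Uopen, ?_⟩
    refine hU.mono fun x hx => ?_
    exact eq_iff_iff.mp hx
  choose U hUopen hUres using key
  haveI : Countable b := bct.to_subtype
  set C : Set X := ⋂ V : b, {x | x ∈ f ⁻¹' (V : Set Y) ↔ x ∈ U V} with hCdef
  have hC : C ∈ residual X := countable_iInter_mem.2 hUres
  refine ⟨C, hC, fun x hxC => ?_⟩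
  rw [ContinuousWithinAt, tendsto_nhds]
  intro O Oopen hfxO
  obtain ⟨V, hVb, hfxV, hVO⟩ := hbasis.exists_subset_of_mem_open hfxO Oopen
  have hxU : x ∈ U ⟨V, hVb⟩ := by
    have := (mem_iInter.mp hxC ⟨V, hVb⟩)
    exact this.1 hfxV
  have hsub : U ⟨V, hVb⟩ ∩ C ⊆ f ⁻¹' O := by
    rintro y ⟨hyU, hyC⟩
    have := (mem_iInter.mp hyC ⟨V, hVb⟩).2 hyU
    exact hVO this
  refine Filter.mem_of_superset ?_ hsub
  exact Filter.inter_mem (mem_nhdsWithin_of_mem_nhds ((hUopen _).mem_nhds hxU))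
    self_mem_nhdsWithin

/-- Cocycle continuity: a measurable map `f` from a Polish group satisfying
`f (x₁ * x₂) = A x₁ (f x₂)` with each `A x` continuous is continuous. -/
theorem cocycle_continuous {X Y : Type*}
    [Group X] [TopologicalSpace X] [IsTopologicalGroup X] [PolishSpace X]
    [MeasurableSpace X] [BorelSpace X]
    [TopologicalSpace Y] [SecondCountableTopology Y]
    [MeasurableSpace Y] [OpensMeasurableSpace Y]
    {f : X → Y} (hf : Measurable f) (A : X → Y → Y) (hA : ∀ x, Continuous (A x))
    (hco : ∀ x₁ x₂, f (x₁ * x₂) = A x₁ (f x₂)) : Continuous f := by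
  haveI : BaireSpace X := by infer_instance
  have hone : ContinuousAt f 1 := by
    rw [ContinuousAt, tendsto_iff_seq_tendsto]
    intro u hu
    obtain ⟨C, hC, hCcont⟩ := exists_residual_continuousWithinAt hf
    have hres : (C ∩ ⋂ k, (fun x : X => x * u k) ⁻¹' C) ∈ residual X := by
      refine Filter.inter_mem hC (countable_iInter_mem.2 fun k => ?_)
      have hmap := (Homeomorph.mulRight (u k)).residual_map_eq
      rw [← hmap, Filter.mem_map] at hC
      exact hC
    obtain ⟨d, hdC, hdk⟩ := (dense_of_mem_residual hres).nonempty
    have hdk' : ∀ k, d * u k ∈ C := fun k => mem_iInter.mp hdk k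
    have htend : Tendsto (fun k => d * u k) atTop (𝓝[C] d) := by
      rw [tendsto_nhdsWithin_iff]
      constructor
      · have := (tendsto_const_nhds (x := d) (f := atTop (α := ℕ))).mul hu
        simpa using this
      · exact Filter.Eventually.of_forall hdk'
    have h1 : Tendsto (fun k => f (d * u k)) atTop (𝓝 (f d)) :=
      (hCcont d hdC).tendsto.comp htend
    have h2 : Tendsto (fun k => A d⁻¹ (f (d * u k))) atTop (𝓝 (A d⁻¹ (f d))) :=
      ((hA d⁻¹).tendsto _).comp h1
    have he1 : ∀ k, A d⁻¹ (f (d * u k)) = f (u k) := by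
      intro k
      rw [← hco]
      congr 1
      group
    have he2 : A d⁻¹ (f d) = f 1 := by
      rw [show f d = f (d * 1) by rw [mul_one], ← hco]
      congr 1
      group
    rw [he2] at h2
    refine h2.congr fun k => ?_
    exact (he1 k)
  rw [continuous_iff_continuousAt]
  intro x₀
  have h1 : Tendsto (fun x : X => x₀⁻¹ * x) (𝓝 x₀) (𝓝 (1 : X)) := by
    have h1 : ContinuousAt (fun x : X => x₀⁻¹ * x) x₀ :=
      (continuous_const.mul continuous_id).continuousAt
    rw [ContinuousAt] at h1
    simpa using h1
  have hcomp : Tendsto (fun x => f (x₀⁻¹ * x)) (𝓝 x₀) (𝓝 (f 1)) := hone.tendsto.comp h1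
  have hmain := ((hA x₀).tendsto _).comp hcomp
  have heval : A x₀ (f 1) = f x₀ := by rw [← hco, mul_one]
  rw [heval] at hmain
  rw [ContinuousAt]
  refine hmain.congr fun x => ?_
  rw [Function.comp_apply, ← hco]
  congr 1
  group

/-- Key lemma: if `ψ : G → H` is a normal compression and `N` is a nontrivial closed normal
subgroup of `G` whose image is dense in `H`, then `N` contains all commutators. -/
theorem key_commutator {G H : Type*}
    [Group G] [TopologicalSpace G] [IsTopologicalGroup G] [PolishSpace G]
    [Group H] [TopologicalSpace H] [IsTopologicalGroup H] [PolishSpace H]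
    (ψ : G →* H) (hψc : Continuous ψ) (hψi : Function.Injective ψ)
    (hnorm : ψ.range.Normal)
    (N : Subgroup G) (hNn : N.Normal) (hNc : IsClosed (N : Set G))
    (hdenseN : Dense ((N.map ψ : Subgroup H) : Set H)) :
    ∀ a b : G, ⁅a, b⁆ ∈ N := by
  borelize G H
  -- the conjugation "action" of H on G
  have hconj : ∀ (h : H) (g : G), ∃ x : G, ψ x = h * ψ g * h⁻¹ := by
    intro h g
    have : h * ψ g * h⁻¹ ∈ ψ.range := hnorm.conj_mem (ψ g) ⟨g, rfl⟩ h
    rcases this with ⟨x, hx⟩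
    exact ⟨x, hx⟩
  classical
  set A : H → G → G := fun h g => (hconj h g).choose with hAdef
  have hAspec : ∀ (h : H) (g : G), ψ (A h g) = h * ψ g * h⁻¹ := fun h g => (hconj h g).choose_spec
  -- A h is a monoid hom
  have hAmul : ∀ (h : H) (g₁ g₂ : G), A h (g₁ * g₂) = A h g₁ * A h g₂ := by
    intro h g₁ g₂
    apply hψi
    rw [map_mul, hAspec, hAspec, hAspec, map_mul]
    group
  have hAmeas : ∀ h : H, Measurable (A h) := by
    intro h
    have hemb : MeasurableEmbedding (ψ : G → H) := hψc.measurableEmbedding hψi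
    rw [← hemb.measurable_comp_iff]
    have : (ψ : G → H) ∘ (A h) = fun g => h * ψ g * h⁻¹ := by
      funext g
      exact hAspec h g
    rw [this]
    exact (((continuous_const.mul hψc).mul continuous_const).measurable)
  have hAcont : ∀ h : H, Continuous (A h) := by
    intro h
    exact measurable_monoidHom_continuous
      { toFun := A h
        map_one' := by
          apply hψi
          rw [hAspec, map_one]
          group
        map_mul' := hAmul h } (hAmeas h)
  intro a b
  -- f h = A h b
  set f : H → G := fun h => A h b with hfdef
  have hfmeas : Measurable f := by
    have hemb : MeasurableEmbedding (ψ : G → H) := hψc.measurableEmbedding hψi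
    rw [← hemb.measurable_comp_iff]
    have : (ψ : G → H) ∘ f = fun h => h * ψ b * h⁻¹ := by
      funext h
      exact hAspec h b
    rw [this]
    exact (((continuous_id.mul continuous_const).mul continuous_inv).measurable)
  have hfco : ∀ h₁ h₂ : H, f (h₁ * h₂) = A h₁ (f h₂) := by
    intro h₁ h₂
    apply hψi
    rw [hAspec, hAspec, hAspec]
    group
  have hfcont : Continuous f := cocycle_continuous hfmeas A hAcont hfco
  -- the closed set of h with f h * b⁻¹ ∈ N contains the dense set ψ '' N
  have hψN : ∀ n ∈ N, f (ψ n) = n * b * n⁻¹ := by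
    intro n _
    apply hψi
    rw [hAspec, map_mul, map_mul, map_inv]
  have hψG : ∀ g : G, f (ψ g) = g * b * g⁻¹ := by
    intro g
    apply hψi
    rw [hAspec, map_mul, map_mul, map_inv]
  have hSclosed : IsClosed {h : H | f h * b⁻¹ ∈ N} :=
    IsClosed.preimage (hfcont.mul continuous_const) hNc
  have hSsub : ((N.map ψ : Subgroup H) : Set H) ⊆ {h : H | f h * b⁻¹ ∈ N} := by
    rintro x ⟨n, hn, rfl⟩
    simp only [mem_setOf_eq]
    rw [hψN n hn]
    have h1 : b * n⁻¹ * b⁻¹ ∈ N := hNn.conj_mem n⁻¹ (N.inv_mem hn) b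
    have : n * b * n⁻¹ * b⁻¹ = n * (b * n⁻¹ * b⁻¹) := by group
    rw [this]
    exact N.mul_mem hn h1
  have hSall : ∀ h : H, f h * b⁻¹ ∈ N := by
    intro h
    have : closure ((N.map ψ : Subgroup H) : Set H) ⊆ {h : H | f h * b⁻¹ ∈ N} :=
      closure_minimal hSsub hSclosed
    rw [hdenseN.closure_eq] at this
    exact this (mem_univ h)
  have := hSall (ψ a)
  rw [hψG a] at this
  have heq : ⁅a, b⁆ = a * b * a⁻¹ * b⁻¹ := rfl
  rw [heq]
  convert this using 1

end AuxiliaryLemmas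

/-- A topological group is topologically simple if it is nontrivial and its only closed
normal subgroups are the trivial subgroup and the whole group. -/
def IsTopologicallySimple (G : Type*) [Group G] [TopologicalSpace G] : Prop :=
  Nontrivial G ∧ ∀ N : Subgroup G, N.Normal → IsClosed (N : Set G) → N = ⊥ ∨ N = ⊤

/-- Let `G` and `H` be Polish groups with trivial center that are topologically
perfect, and let `ψ : G → H` be a normal compression. Then `G` is topologically simple if
and only if `H` is topologically simple. -/
theorem stmt_5 {G H : Type*}
    [Group G] [TopologicalSpace G] [IsTopologicalGroup G] [PolishSpace G]
    [Group H] [TopologicalSpace H] [IsTopologicalGroup H] [PolishSpace H]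
    (hGz : Subgroup.center G = ⊥) (hHz : Subgroup.center H = ⊥)
    (hGp : (commutator G).topologicalClosure = ⊤)
    (hHp : (commutator H).topologicalClosure = ⊤)
    (ψ : G →* H) (hψc : Continuous ψ) (hψi : Function.Injective ψ)
    (hdense : DenseRange (⇑ψ)) (hnorm : ψ.range.Normal) :
    IsTopologicallySimple G ↔ IsTopologicallySimple H := by
  constructor
  · rintro ⟨hGnt, hGsimp⟩
    refine ⟨?_, ?_⟩
    · obtain ⟨x, y, hxy⟩ := hGnt
      exact ⟨ψ x, ψ y, fun h => hxy (hψi h)⟩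
    · intro M hMn hMc
      by_cases hM : M = ⊥
      · exact Or.inl hM
      right
      obtain ⟨m, hmM, hm1⟩ : ∃ m ∈ M, m ≠ 1 := by
        by_contra hall
        push_neg at hall
        exact hM ((Subgroup.eq_bot_iff_forall M).mpr hall)
      have hmnc : ¬ ∀ g : H, g * m = m * g := by
        intro hcomm
        have : m ∈ Subgroup.center H := Subgroup.mem_center_iff.mpr hcomm
        rw [hHz, Subgroup.mem_bot] at this
        exact hm1 this
      have hex : ∃ g : G, ψ g * m ≠ m * ψ g := by
        by_contra hall
        push_neg at hall
        apply hmnc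
        intro g'
        have hcl : IsClosed {y : H | y * m = m * y} :=
          isClosed_eq (continuous_id.mul continuous_const) (continuous_const.mul continuous_id)
        have hsub : Set.range (ψ : G → H) ⊆ {y : H | y * m = m * y} := by
          rintro _ ⟨g, rfl⟩
          exact hall g
        have := closure_minimal hsub hcl
        rw [hdense.closure_eq] at this
        exact this (Set.mem_univ g')
      obtain ⟨g, hg⟩ := hex
      set c := m * ψ g * m⁻¹ * (ψ g)⁻¹ with hc
      have hcM : c ∈ M := by
        have h1 : ψ g * m⁻¹ * (ψ g)⁻¹ ∈ M := hMn.conj_mem m⁻¹ (M.inv_mem hmM) (ψ g)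
        have heq : c = m * (ψ g * m⁻¹ * (ψ g)⁻¹) := by rw [hc]; group
        rw [heq]
        exact M.mul_mem hmM h1
      have hcr : c ∈ ψ.range := by
        have h1 : m * ψ g * m⁻¹ ∈ ψ.range := hnorm.conj_mem (ψ g) ⟨g, rfl⟩ m
        have h2 : (ψ g)⁻¹ ∈ ψ.range := ψ.range.inv_mem ⟨g, rfl⟩
        exact ψ.range.mul_mem h1 h2
      have hc1 : c ≠ 1 := by
        intro h
        have heq : m * ψ g = ψ g * m := by
          calc m * ψ g = (m * ψ g * m⁻¹ * (ψ g)⁻¹) * (ψ g * m) := by group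
          _ = 1 * (ψ g * m) := by rw [← hc, h]
          _ = ψ g * m := one_mul _
        exact hg heq.symm
      obtain ⟨g₀, hg₀⟩ := hcr
      have hg₀M : g₀ ∈ M.comap ψ := by
        simp only [Subgroup.mem_comap]
        rw [hg₀]
        exact hcM
      have hg₀1 : g₀ ≠ 1 := by
        intro h
        rw [h, map_one] at hg₀
        exact hc1 hg₀.symm
      rcases hGsimp (M.comap ψ) (hMn.comap ψ) (hMc.preimage hψc) with h | h
      · exfalso
        rw [h, Subgroup.mem_bot] at hg₀M
        exact hg₀1 hg₀M
      · have hsub : Set.range (ψ : G → H) ⊆ (M : Set H) := by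
          rintro _ ⟨g', rfl⟩
          have : g' ∈ M.comap ψ := by rw [h]; trivial
          exact this
        have := closure_minimal hsub hMc
        rw [hdense.closure_eq] at this
        exact (Subgroup.eq_top_iff' M).mpr fun x => this (Set.mem_univ x)
  · rintro ⟨hHnt, hHsimp⟩
    refine ⟨?_, ?_⟩
    · by_contra hG
      rw [not_nontrivial_iff_subsingleton] at hG
      have h1 : Set.range (ψ : G → H) ⊆ ({1} : Set H) := by
        rintro _ ⟨g, rfl⟩
        have : g = 1 := Subsingleton.elim g 1
        rw [this, map_one]
        exact Set.mem_singleton _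
      have := closure_minimal h1 isClosed_singleton
      rw [hdense.closure_eq] at this
      obtain ⟨x, y, hxy⟩ := hHnt
      apply hxy
      have hx := this (Set.mem_univ x)
      have hy := this (Set.mem_univ y)
      rw [Set.mem_singleton_iff] at hx hy
      rw [hx, hy]
    · intro N hNn hNc
      by_cases hN : N = ⊥
      · exact Or.inl hN
      right
      obtain ⟨n₀, hn₀N, hn₀⟩ : ∃ n ∈ N, n ≠ 1 := by
        by_contra hall
        push_neg at hall
        exact hN ((Subgroup.eq_bot_iff_forall N).mpr hall)
      set K := (N.map ψ).topologicalClosure with hKdef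
      have hKc : IsClosed (K : Set H) := Subgroup.isClosed_topologicalClosure _
      have hKcarrier : (K : Set H) = closure ((N.map ψ : Subgroup H) : Set H) := rfl
      have hKn : K.Normal := by
        constructor
        intro k hk x
        have step2 : ∀ s ∈ ((N.map ψ : Subgroup H) : Set H), x * s * x⁻¹ ∈ (K : Set H) := by
          rintro s hs
          have hcl : IsClosed {y : H | y * s * y⁻¹ ∈ (K : Set H)} :=
            IsClosed.preimage ((continuous_id.mul continuous_const).mul continuous_inv) hKc
          have hsub : Set.range (ψ : G → H) ⊆ {y : H | y * s * y⁻¹ ∈ (K : Set H)} := by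
            rintro _ ⟨g', rfl⟩
            rcases hs with ⟨n, hn, rfl⟩
            have heq : ψ g' * ψ n * (ψ g')⁻¹ = ψ (g' * n * g'⁻¹) := by
              rw [map_mul, map_mul, map_inv]
            simp only [Set.mem_setOf_eq]
            rw [heq]
            exact (N.map ψ).le_topologicalClosure
              (Subgroup.mem_map.mpr ⟨g' * n * g'⁻¹, hNn.conj_mem n hn g', rfl⟩)
          have := closure_minimal hsub hcl
          rw [hdense.closure_eq] at this
          exact this (Set.mem_univ x)
        have hmap : (fun y : H => x * y * x⁻¹) '' closure ((N.map ψ : Subgroup H) : Set H)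
            ⊆ (K : Set H) := by
          refine Set.Subset.trans (image_closure_subset_closure_image
            ((continuous_const.mul continuous_id).mul continuous_const)) ?_
          refine closure_minimal ?_ hKc
          rintro _ ⟨s, hs, rfl⟩
          exact step2 s hs
        have hkK : k ∈ closure ((N.map ψ : Subgroup H) : Set H) := hk
        exact hmap ⟨k, hkK, rfl⟩
      have hKne : K ≠ ⊥ := by
        intro h
        have hmem : ψ n₀ ∈ K :=
          (N.map ψ).le_topologicalClosure (Subgroup.mem_map.mpr ⟨n₀, hn₀N, rfl⟩)
        rw [h, Subgroup.mem_bot] at hmem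
        apply hn₀
        apply hψi
        rw [hmem, map_one]
      rcases hHsimp K hKn hKc with h | h
      · exact absurd h hKne
      have hdenseN : Dense ((N.map ψ : Subgroup H) : Set H) := by
        rw [dense_iff_closure_eq, ← hKcarrier, h]
        rfl
      have hcomm := key_commutator ψ hψc hψi hnorm N hNn hNc hdenseN
      have hle : commutator G ≤ N := by
        rw [commutator_def, Subgroup.commutator_le]
        intro g₁ _ g₂ _
        exact hcomm g₁ g₂
      have hfin := Subgroup.topologicalClosure_minimal _ hle hNc
      rw [hGp] at hfin
      exact top_le_iff.mp hfin
end
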